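/- Let G be a group with finite symmetric generating set S, μ a symmetric probability measure supported on S, H a finite group, and μ̃ = ν*μ*ν on H ≀ G with ν uniform on H. Let A ⊆ G be finite, connected in the Cayley graph, containing e, with outer boundary dA, and let P_A be the substochastic matrix p_A(x,y) = μ(x⁻¹y)·1_{x,y ∈ A}. Then for every function f : G → ℝ supported in A, ν_{A,dA} * f * μ̃ = ν_{A,dA} * (P_A f), where f is identified with the signed measure Σ_x f(x) δ_x on H ≀ G. -/

import Mathlib

open Function MonoidAlgebra
open scoped Classical
set_option linter.unusedSectionVars false

noncomputable section

variable (G H : Type) [Group G] [Group H] [Fintype H]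

/-- The automorphism `L_g` of the full group of configurations `G → H`,
`(L_g η)(x) = η (g⁻¹ x)`. -/
def lampAut (g : G) : (G → H) ≃* (G → H) where
  toFun η := fun x => η (g⁻¹ * x)
  invFun η := fun x => η (g * x)
  left_inv η := by funext x; simp [← mul_assoc]
  right_inv η := by funext x; simp [← mul_assoc]
  map_mul' η η' := rfl

/-- The action homomorphism `G →* MulAut (G → H)`. -/
def lampHom : G →* MulAut (G → H) where
  toFun := lampAut G H
  map_one' := by ext η x; simp [lampAut]
  map_mul' g₁ g₂ := by ext η x; simp [lampAut, MulAut.mul_apply, mul_assoc]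

/-- The unrestricted wreath product `(H^G) ⋊ G`. -/
abbrev WrFull := (G → H) ⋊[lampHom G H] G

/-- The (restricted) wreath product `H ≀ G = (⊕_G H) ⋊ G`, realized as the
subgroup of the unrestricted wreath product consisting of the elements whose
configuration has finite support. -/
def Wreath : Subgroup (WrFull G H) where
  carrier := {w | (mulSupport w.left).Finite}
  one_mem' := by
    simp only [Set.mem_setOf_eq, SemidirectProduct.one_left]
    simp [mulSupport]
  mul_mem' := by
    intro a b ha hb
    simp only [Set.mem_setOf_eq, SemidirectProduct.mul_left] at *
    refine (ha.union ?_).subset (mulSupport_mul _ _)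
    have : mulSupport (lampHom G H a.right b.left) =
        (fun x => (a.right)⁻¹ * x) ⁻¹' mulSupport b.left := by
      ext x
      simp [lampHom, lampAut, mulSupport]
    rw [this]
    exact hb.preimage (by
      intro x _ y _ h
      simpa using mul_left_cancel h)
  inv_mem' := by
    intro a ha
    simp only [Set.mem_setOf_eq, SemidirectProduct.inv_left] at *
    have : mulSupport (lampHom G H (a.right)⁻¹ (a.left)⁻¹) =
        (fun x => a.right * x) ⁻¹' mulSupport a.left := by
      ext x
      simp [lampHom, lampAut, mulSupport]
    rw [this]
    exact ha.preimage (by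
      intro x _ y _ h
      simpa using mul_left_cancel h)

/-- The configuration which has state `h` at the point `g` and is trivial
elsewhere. -/
def pointConf (g : G) (h : H) : G → H := fun x => if x = g then h else 1

lemma pointConf_finite (g : G) (h : H) : (mulSupport (pointConf G H g h)).Finite := by
  apply (Set.finite_singleton g).subset
  intro x hx
  by_contra hxg
  simp only [Set.mem_singleton_iff] at hxg
  simp [mulSupport, pointConf, hxg] at hx

/-- A finitely supported configuration together with a position, as an
element of the wreath product. -/
def wr (η : G → H) (hη : (mulSupport η).Finite) (g : G) : Wreath G H :=
  ⟨⟨η, g⟩, hη⟩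

/-- The embedding of the base group `G` in the wreath product, `g ↦ (1, g)`. -/
def embG (g : G) : Wreath G H :=
  wr G H 1 (by simp [mulSupport]) g

/-- The embedding of the lamp group `H` in the wreath product,
`h ↦ (η_e^h, e)`. -/
def embH (h : H) : Wreath G H :=
  wr G H (pointConf G H 1 h) (pointConf_finite G H 1 h) 1

/-- The point mass `δ_g` at the embedded element `g ∈ G`, as an element of the
group algebra of the wreath product. -/
def deltaG (g : G) : MonoidAlgebra ℝ (Wreath G H) :=
  MonoidAlgebra.single (embG G H g) 1

/-- The uniform probability measure `ν` on the embedded copy of `H` inside the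
wreath product. -/
def nu : MonoidAlgebra ℝ (Wreath G H) :=
  ∑ h : H, MonoidAlgebra.single (embH G H h) ((Fintype.card H : ℝ)⁻¹)

/-- The translated uniform measure `ν_g = δ_g * ν * δ_{g⁻¹}`. -/
def nuAt (g : G) : MonoidAlgebra ℝ (Wreath G H) :=
  deltaG G H g * nu G H * deltaG G H g⁻¹

/-- The complementary projection `ν̄_g = δ_{(1,e)} - ν_g`. -/
def nuBarAt (g : G) : MonoidAlgebra ℝ (Wreath G H) :=
  1 - nuAt G H g

end

/-- The Cayley graph of `G` with respect to `S` (for symmetric `S` the second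
condition in the adjacency is redundant). -/
def cayley (G : Type) [Group G] (S : Finset G) : SimpleGraph G where
  Adj x y := x ≠ y ∧ x⁻¹ * y ∈ S ∧ y⁻¹ * x ∈ S
  symm := ⟨by
    intro x y h
    exact ⟨h.1.symm, h.2.2, h.2.1⟩⟩
  loopless := ⟨fun x h => h.1 rfl⟩

/-- The outer vertex boundary of the finite set `A` in the Cayley graph of `G`
with respect to the (symmetric) set `S`: all vertices outside `A` with a
neighbour in `A`. -/
noncomputable def cayleyBoundary (G : Type) [Group G] (S A : Finset G) : Finset G :=
  (A.biUnion fun x => S.image fun s => x * s).filter (· ∉ A)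
noncomputable section Aux2

variable (G H : Type) [Group G] [Group H] [Fintype H]

lemma embG_mul (g g' : G) : embG G H g * embG G H g' = embG G H (g * g') := by
  apply Subtype.ext
  show (embG G H g).val * (embG G H g').val = _
  apply SemidirectProduct.ext <;> simp [embG, wr]

lemma embG_one : embG G H 1 = 1 := by
  apply Subtype.ext
  apply SemidirectProduct.ext <;> simp [embG, wr]

lemma deltaG_mul (g g' : G) : deltaG G H g * deltaG G H g' = deltaG G H (g * g') := by
  rw [deltaG, deltaG, MonoidAlgebra.single_mul_single, embG_mul, one_mul]; rfl

lemma deltaG_one : deltaG G H 1 = 1 := by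
  rw [deltaG, embG_one, MonoidAlgebra.one_def]

/-- The lamp element `(η_g^h, e)`. -/
def lampElt (g : G) (h : H) : Wreath G H :=
  wr G H (pointConf G H g h) (pointConf_finite G H g h) 1

lemma conj_embH (g : G) (h : H) :
    embG G H g * embH G H h * embG G H g⁻¹ = lampElt G H g h := by
  apply Subtype.ext
  show (embG G H g).val * (embH G H h).val * (embG G H g⁻¹).val = _
  apply SemidirectProduct.ext
  · show (1 * lampHom G H g (pointConf G H 1 h)) * lampHom G H (g * 1) 1 = _
    funext x
    simp [lampHom, lampAut, pointConf, lampElt, wr, inv_mul_eq_one, eq_comm]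
  · show g * 1 * g⁻¹ = 1
    group

lemma lampElt_mul (g : G) (h h' : H) :
    lampElt G H g h * lampElt G H g h' = lampElt G H g (h * h') := by
  apply Subtype.ext
  apply SemidirectProduct.ext
  · show pointConf G H g h * lampHom G H 1 (pointConf G H g h') = _
    rw [map_one]
    funext x
    by_cases hx : x = g <;> simp [pointConf, lampElt, wr, hx]
  · show (1 : G) * 1 = 1
    simp

lemma lampElt_comm {x y : G} (hxy : x ≠ y) (h h' : H) :
    lampElt G H x h * lampElt G H y h' = lampElt G H y h' * lampElt G H x h := by
  apply Subtype.ext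
  apply SemidirectProduct.ext
  · show pointConf G H x h * lampHom G H 1 (pointConf G H y h') =
      pointConf G H y h' * lampHom G H 1 (pointConf G H x h)
    rw [map_one]
    funext z
    show pointConf G H x h z * pointConf G H y h' z =
      pointConf G H y h' z * pointConf G H x h z
    by_cases hz : z = x
    · subst hz
      simp [pointConf, hxy]
    · by_cases hz' : z = y <;> simp [pointConf, hz, hz', hxy.symm]
  · rfl

lemma embH_mul (h h' : H) : embH G H h * embH G H h' = embH G H (h * h') :=
  lampElt_mul G H 1 h h'

lemma nu_mul_nu : nu G H * nu G H = nu G H := by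
  set c : ℝ := (Fintype.card H : ℝ)⁻¹ with hc
  have hcard : (Fintype.card H : ℝ) ≠ 0 := by
    exact_mod_cast Fintype.card_ne_zero
  rw [nu, Finset.sum_mul]
  have : ∀ h : H, (MonoidAlgebra.single (embH G H h) c * ∑ h' : H,
      MonoidAlgebra.single (embH G H h') c) =
      ∑ k : H, MonoidAlgebra.single (embH G H k) (c * c) := by
    intro h
    rw [Finset.mul_sum]
    refine Fintype.sum_bijective (fun h' => h * h')
      (Group.mulLeft_bijective h) _ _ (fun h' => ?_)
    rw [MonoidAlgebra.single_mul_single, embH_mul]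
  rw [Finset.sum_congr rfl (fun h _ => this h), Finset.sum_const, Finset.card_univ]
  rw [Finset.smul_sum]
  refine Finset.sum_congr rfl (fun k _ => ?_)
  rw [MonoidAlgebra.smul_single, nsmul_eq_mul]
  congr 1
  rw [hc]
  field_simp

end Aux2
noncomputable section Aux3

variable (G H : Type) [Group G] [Group H] [Fintype H]

lemma nuAt_eq (g : G) : nuAt G H g =
    ∑ h : H, MonoidAlgebra.single (lampElt G H g h) ((Fintype.card H : ℝ)⁻¹) := by
  rw [nuAt, nu, Finset.mul_sum, Finset.sum_mul]
  refine Finset.sum_congr rfl (fun h _ => ?_)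
  rw [deltaG, deltaG, MonoidAlgebra.single_mul_single, MonoidAlgebra.single_mul_single,
    conj_embH]
  ring_nf

lemma nuAt_commute (x y : G) : Commute (nuAt G H x) (nuAt G H y) := by
  rcases eq_or_ne x y with rfl | hxy
  · exact Commute.refl _
  · rw [nuAt_eq, nuAt_eq]
    refine Commute.sum_right _ _ _ (fun h' _ => ?_)
    refine Commute.sum_left _ _ _ (fun h'' _ => ?_)
    rw [commute_iff_eq, MonoidAlgebra.single_mul_single, MonoidAlgebra.single_mul_single,
      lampElt_comm G H hxy, mul_comm ((Fintype.card H : ℝ)⁻¹)]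

lemma nuAt_idem (g : G) : nuAt G H g * nuAt G H g = nuAt G H g := by
  rw [nuAt]
  calc deltaG G H g * nu G H * deltaG G H g⁻¹ * (deltaG G H g * nu G H * deltaG G H g⁻¹)
      = deltaG G H g * nu G H * (deltaG G H g⁻¹ * deltaG G H g) * nu G H * deltaG G H g⁻¹ := by
        noncomm_ring
    _ = deltaG G H g * (nu G H * nu G H) * deltaG G H g⁻¹ := by
        rw [deltaG_mul, inv_mul_cancel, deltaG_one]; noncomm_ring
    _ = deltaG G H g * nu G H * deltaG G H g⁻¹ := by rw [nu_mul_nu]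

lemma deltaG_nu_deltaG (x s : G) :
    deltaG G H x * nu G H * deltaG G H s = nuAt G H x * deltaG G H (x * s) := by
  rw [nuAt, mul_assoc (deltaG G H x * nu G H), deltaG_mul, inv_mul_cancel_left]

lemma deltaG_nu (g : G) : deltaG G H g * nu G H = nuAt G H g * deltaG G H g := by
  rw [nuAt, mul_assoc, deltaG_mul, inv_mul_cancel, deltaG_one, mul_one]

lemma key_expand (x s : G) :
    deltaG G H x * nu G H * deltaG G H s * nu G H
      = nuAt G H x * nuAt G H (x * s) * deltaG G H (x * s) := by
  rw [deltaG_nu_deltaG, mul_assoc, deltaG_nu, ← mul_assoc]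

end Aux3
noncomputable section Aux4

variable (G H : Type) [Group G] [Group H] [Fintype H]

lemma nuAt_commute_nuBarAt (x y : G) : Commute (nuAt G H x) (nuBarAt G H y) := by
  rw [nuBarAt]
  exact (Commute.one_right _).sub_right (nuAt_commute G H x y)

variable (S A : Finset G)
  (hcA : (A : Set G).Pairwise fun a b => Commute (nuAt G H a) (nuAt G H b))
  (hcdA : ((cayleyBoundary G S A : Finset G) : Set G).Pairwise
      fun a b => Commute (nuBarAt G H a) (nuBarAt G H b))

lemma W_absorb {x : G} (hx : x ∈ A) :
    (A.noncommProd (nuAt G H) hcA *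
      (cayleyBoundary G S A).noncommProd (nuBarAt G H) hcdA) * nuAt G H x
    = A.noncommProd (nuAt G H) hcA *
      (cayleyBoundary G S A).noncommProd (nuBarAt G H) hcdA := by
  have hQ : Commute ((cayleyBoundary G S A).noncommProd (nuBarAt G H) hcdA) (nuAt G H x) :=
    (Finset.noncommProd_commute _ _ _ _ (fun y _ => nuAt_commute_nuBarAt G H x y)).symm
  rw [mul_assoc, hQ.eq, ← mul_assoc]
  congr 1
  rw [← Finset.noncommProd_erase_mul A hx (nuAt G H) hcA, mul_assoc, nuAt_idem]

lemma W_kill {z : G} (hz : z ∈ cayleyBoundary G S A) :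
    (A.noncommProd (nuAt G H) hcA *
      (cayleyBoundary G S A).noncommProd (nuBarAt G H) hcdA) * nuAt G H z = 0 := by
  rw [mul_assoc, ← Finset.noncommProd_erase_mul _ hz (nuBarAt G H) hcdA, mul_assoc]
  have : nuBarAt G H z * nuAt G H z = 0 := by
    rw [nuBarAt, sub_mul, one_mul, nuAt_idem, sub_self]
  rw [this, mul_zero, mul_zero]

lemma mem_cayleyBoundary {x s : G} (hx : x ∈ A) (hs : s ∈ S) (hxs : x * s ∉ A) :
    x * s ∈ cayleyBoundary G S A := by
  rw [cayleyBoundary, Finset.mem_filter]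
  exact ⟨Finset.mem_biUnion.2 ⟨x, hx, Finset.mem_image.2 ⟨s, hs, rfl⟩⟩, hxs⟩

lemma W_key {x s : G} (hx : x ∈ A) (hs : s ∈ S) :
    (A.noncommProd (nuAt G H) hcA *
      (cayleyBoundary G S A).noncommProd (nuBarAt G H) hcdA) *
      (deltaG G H x * nu G H * deltaG G H s * nu G H)
    = if x * s ∈ A then
        (A.noncommProd (nuAt G H) hcA *
          (cayleyBoundary G S A).noncommProd (nuBarAt G H) hcdA) * deltaG G H (x * s)
      else 0 := by
  rw [key_expand, ← mul_assoc, ← mul_assoc, W_absorb G H S A hcA hcdA hx]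
  by_cases h : x * s ∈ A
  · rw [if_pos h, W_absorb G H S A hcA hcdA h]
  · rw [if_neg h, W_kill G H S A hcA hcdA (mem_cayleyBoundary G S A hx hs h), zero_mul]

end Aux4

/-- (Invariance lemma.)  Let `μ` be a symmetric probability
measure supported on the finite symmetric generating set `S`,
`μ̃ = ν * μ * ν` on `H ≀ G`, and let `A ∋ e` be a finite connected subset of the
Cayley graph with outer boundary `dA`.  Then for every `f : G → ℝ` supported
in `A`, viewed as an element of the group algebra of `H ≀ G`,
`ν_{A,dA} * f * μ̃ = ν_{A,dA} * (P_A f)`,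
where `P_A f (x) = ∑_{y ∈ A} μ(x⁻¹ y) f(y)` for `x ∈ A`. -/
theorem invariance_lemma (G H : Type) [Group G] [Group H] [Fintype H]
    (S : Finset G) (hS : ∀ s ∈ S, s⁻¹ ∈ S)
    (μ : MonoidAlgebra ℝ G) (hμpos : ∀ g : G, 0 ≤ μ.coeff g)
    (hμsupp : ↑μ.coeff.support ⊆ (S : Set G)) (hμsym : ∀ g : G, μ.coeff g⁻¹ = μ.coeff g)
    (hμprob : ∑ g ∈ μ.coeff.support, μ.coeff g = 1)
    (A : Finset G) (h1A : (1 : G) ∈ A)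
    (hAconn : ((cayley G S).induce (A : Set G)).Connected)
    (hcA : (A : Set G).Pairwise fun a b => Commute (nuAt G H a) (nuAt G H b))
    (hcdA : ((cayleyBoundary G S A : Finset G) : Set G).Pairwise
      fun a b => Commute (nuBarAt G H a) (nuBarAt G H b))
    (f : MonoidAlgebra ℝ G) (hf : ↑f.coeff.support ⊆ (A : Set G)) :
    (A.noncommProd (nuAt G H) hcA *
        (cayleyBoundary G S A).noncommProd (nuBarAt G H) hcdA) *
      (show MonoidAlgebra ℝ (Wreath G H) from MonoidAlgebra.ofCoeff (Finsupp.mapDomain (embG G H) f.coeff)) *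
      (nu G H * (show MonoidAlgebra ℝ (Wreath G H) from
          MonoidAlgebra.ofCoeff (Finsupp.mapDomain (embG G H) μ.coeff)) * nu G H)
    = (A.noncommProd (nuAt G H) hcA *
        (cayleyBoundary G S A).noncommProd (nuBarAt G H) hcdA) *
      (show MonoidAlgebra ℝ (Wreath G H) from MonoidAlgebra.ofCoeff (Finsupp.mapDomain (embG G H)
        (∑ x ∈ A, MonoidAlgebra.single x (∑ y ∈ A, μ.coeff (x⁻¹ * y) * f.coeff y)).coeff)) := by
  set W := A.noncommProd (nuAt G H) hcA *
      (cayleyBoundary G S A).noncommProd (nuBarAt G H) hcdA with hWdef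
  have hfA : f.coeff.support ⊆ A := Finset.coe_subset.mp hf
  have hF : (MonoidAlgebra.ofCoeff (Finsupp.mapDomain (embG G H) f.coeff) : MonoidAlgebra ℝ (Wreath G H))
      = ∑ y ∈ A, f.coeff y • deltaG G H y := by
    rw [Finsupp.mapDomain, Finsupp.sum, MonoidAlgebra.ofCoeff_sum, Finset.sum_subset hfA]
    · refine Finset.sum_congr rfl fun y _ => ?_
      rw [MonoidAlgebra.ofCoeff_single, deltaG, MonoidAlgebra.smul_single', mul_one]
    · intro y _ hy
      rw [Finsupp.notMem_support_iff.mp hy, MonoidAlgebra.ofCoeff_single, MonoidAlgebra.single_zero]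
  have hM : (MonoidAlgebra.ofCoeff (Finsupp.mapDomain (embG G H) μ.coeff) : MonoidAlgebra ℝ (Wreath G H))
      = ∑ s ∈ μ.coeff.support, μ.coeff s • deltaG G H s := by
    rw [Finsupp.mapDomain, Finsupp.sum, MonoidAlgebra.ofCoeff_sum]
    refine Finset.sum_congr rfl fun s _ => ?_
    rw [MonoidAlgebra.ofCoeff_single, deltaG, MonoidAlgebra.smul_single', mul_one]
  have hR : (MonoidAlgebra.ofCoeff (Finsupp.mapDomain (embG G H)
        (∑ x ∈ A, MonoidAlgebra.single x (∑ y ∈ A, μ.coeff (x⁻¹ * y) * f.coeff y)).coeff)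
        : MonoidAlgebra ℝ (Wreath G H))
      = ∑ x ∈ A, (∑ y ∈ A, μ.coeff (x⁻¹ * y) * f.coeff y) • deltaG G H x := by
    rw [MonoidAlgebra.coeff_sum, Finsupp.mapDomain_finset_sum, MonoidAlgebra.ofCoeff_sum]
    refine Finset.sum_congr rfl fun x _ => ?_
    rw [MonoidAlgebra.coeff_single, Finsupp.mapDomain_single, MonoidAlgebra.ofCoeff_single, deltaG,
      MonoidAlgebra.smul_single', mul_one]
  show W * _ * _ = W * _
  rw [hF, hM, hR]
  have lhs_eq : W * (∑ y ∈ A, f.coeff y • deltaG G H y) *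
      (nu G H * (∑ s ∈ μ.coeff.support, μ.coeff s • deltaG G H s) * nu G H)
      = ∑ y ∈ A, ∑ s ∈ μ.coeff.support, (f.coeff y * μ.coeff s) •
          (W * (deltaG G H y * nu G H * deltaG G H s * nu G H)) := by
    simp only [Finset.mul_sum, Finset.sum_mul, smul_mul_assoc, mul_smul_comm, smul_smul, Finset.smul_sum]
    rw [Finset.sum_comm]
    refine Finset.sum_congr rfl fun y _ => ?_
    refine Finset.sum_congr rfl fun s _ => ?_
    rw [mul_comm (μ.coeff s) (f.coeff y)]
    congr 1
    simp only [mul_assoc]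
  rw [lhs_eq]
  have rhs_eq : W * (∑ x ∈ A, (∑ y ∈ A, μ.coeff (x⁻¹ * y) * f.coeff y) • deltaG G H x)
      = ∑ y ∈ A, ∑ x ∈ A, (μ.coeff (x⁻¹ * y) * f.coeff y) • (W * deltaG G H x) := by
    rw [Finset.mul_sum]
    have h1 : ∀ x ∈ A, W * ((∑ y ∈ A, μ.coeff (x⁻¹ * y) * f.coeff y) • deltaG G H x)
        = ∑ y ∈ A, (μ.coeff (x⁻¹ * y) * f.coeff y) • (W * deltaG G H x) := by
      intro x _
      rw [mul_smul_comm, Finset.sum_smul]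
    rw [Finset.sum_congr rfl h1, Finset.sum_comm]
  rw [rhs_eq]
  have key : ∀ y ∈ A, ∀ s ∈ μ.coeff.support,
      W * (deltaG G H y * nu G H * deltaG G H s * nu G H)
        = if y * s ∈ A then W * deltaG G H (y * s) else 0 := by
    intro y hy s hs
    rw [hWdef]
    exact W_key G H S A hcA hcdA hy (hμsupp hs)
  refine Finset.sum_congr rfl fun y hy => ?_
  calc ∑ s ∈ μ.coeff.support, (f.coeff y * μ.coeff s) • (W * (deltaG G H y * nu G H * deltaG G H s * nu G H))
      = ∑ s ∈ μ.coeff.support,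
          (if y * s ∈ A then (f.coeff y * μ.coeff s) • (W * deltaG G H (y * s)) else 0) := by
        refine Finset.sum_congr rfl fun s hs => ?_
        rw [key y hy s hs, smul_ite, smul_zero]
    _ = ∑ s ∈ μ.coeff.support.filter (fun s => y * s ∈ A),
          (f.coeff y * μ.coeff s) • (W * deltaG G H (y * s)) := (Finset.sum_filter _ _).symm
    _ = ∑ x ∈ A.filter (fun x => x⁻¹ * y ∈ μ.coeff.support),
          (μ.coeff (x⁻¹ * y) * f.coeff y) • (W * deltaG G H x) := by
        refine Finset.sum_nbij' (fun s => y * s) (fun x => y⁻¹ * x) (fun s hs => ?_)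
          (fun x hx => ?_) (fun s _ => by group) (fun x _ => by group) (fun s hs => ?_)
        · rw [Finset.mem_filter] at hs ⊢
          refine ⟨hs.2, ?_⟩
          have h2 : (y * s)⁻¹ * y = s⁻¹ := by group
          rw [h2, Finsupp.mem_support_iff, hμsym]
          exact Finsupp.mem_support_iff.mp hs.1
        · rw [Finset.mem_filter] at hx ⊢
          beta_reduce
          have h2 : y * (y⁻¹ * x) = x := by group
          refine ⟨?_, by rw [h2]; exact hx.1⟩
          have h3 : y⁻¹ * x = (x⁻¹ * y)⁻¹ := by group
          rw [Finsupp.mem_support_iff, h3, hμsym]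
          exact Finsupp.mem_support_iff.mp hx.2
        · have h2 : (y * s)⁻¹ * y = s⁻¹ := by group
          rw [h2, hμsym, mul_comm (μ.coeff s) (f.coeff y)]
    _ = ∑ x ∈ A, (μ.coeff (x⁻¹ * y) * f.coeff y) • (W * deltaG G H x) := by
        refine Finset.sum_filter_of_ne fun x hx hne => ?_
        rw [Finsupp.mem_support_iff]
        intro h0
        exact hne (by rw [h0, zero_mul, zero_smul])
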